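/- Let K_2,...,K_m be binary-string-valued random variables, and let K* = K_{i*} be one of them. Suppose for each i: H(K_i) ≥ |K_i| − ε (near uniformity, with |K_i| the bit-length), I(K_i; {K_j : j ≠ i}) ≤ ε (near independence), and |K*| ≤ |K_i|. Let V̄_i = K* ⊕ K̄_i, where K̄_i is the truncation of K_i to its first |K*| bits. Then I(K*; V̄_2,...,V̄_m) ≤ 2(m−2)ε. -/

import Mathlib

open Finset

/-- Probability that random variable `X` equals `a`, under weight function `p`. -/
noncomputable def pr {Ω α : Type*} [Fintype Ω] [DecidableEq α]
    (p : Ω → ℝ) (X : Ω → α) (a : α) : ℝ :=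
  ∑ ω ∈ Finset.univ.filter (fun ω => X ω = a), p ω

/-- Shannon entropy (in bits) of the random variable `X`. -/
noncomputable def ent {Ω α : Type*} [Fintype Ω] [Fintype α] [DecidableEq α]
    (p : Ω → ℝ) (X : Ω → α) : ℝ :=
  - ∑ a, pr p X a * Real.logb 2 (pr p X a)

/-- Mutual information `I(X;Y) = H(X) + H(Y) - H(X,Y)`. -/
noncomputable def mi {Ω α β : Type*} [Fintype Ω] [Fintype α] [Fintype β]
    [DecidableEq α] [DecidableEq β] (p : Ω → ℝ) (X : Ω → α) (Y : Ω → β) : ℝ :=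
  ent p X + ent p Y - ent p (fun ω => (X ω, Y ω))

/-- `p` is a probability mass function on the finite sample space `Ω`. -/
def IsProb {Ω : Type*} [Fintype Ω] (p : Ω → ℝ) : Prop :=
  (∀ ω, 0 ≤ p ω) ∧ ∑ ω, p ω = 1

/-- Mutual independence of a finite family of random variables. -/
def MutIndep {Ω ι : Type*} [Fintype Ω] [Fintype ι] [DecidableEq ι] {α : ι → Type*}
    [∀ i, DecidableEq (α i)] (p : Ω → ℝ) (X : ∀ i, Ω → α i) : Prop :=
  ∀ a : ∀ i, α i, pr p (fun ω i => X i ω) a = ∏ i, pr p (X i) (a i)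

/-- Independence of a pair of random variables. -/
def IndepPair {Ω α β : Type*} [Fintype Ω] [DecidableEq α] [DecidableEq β]
    (p : Ω → ℝ) (X : Ω → α) (Y : Ω → β) : Prop :=
  ∀ a b, pr p (fun ω => (X ω, Y ω)) (a, b) = pr p X a * pr p Y b

namespace Aux

variable {Ω α β γ : Type*} [Fintype Ω]

lemma pr_nonneg [DecidableEq α] {p : Ω → ℝ} (hp : ∀ ω, 0 ≤ p ω) (X : Ω → α) (a : α) :
    0 ≤ pr p X a := Finset.sum_nonneg fun ω _ => hp ω

lemma pr_congr [DecidableEq α] (p : Ω → ℝ) {X Y : Ω → α} (h : ∀ ω, X ω = Y ω) :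
    pr p X = pr p Y := by rw [funext h]

lemma sum_pr [DecidableEq α] [Fintype α] {p : Ω → ℝ} (hp : IsProb p) (X : Ω → α) :
    ∑ a, pr p X a = 1 := by
  unfold pr
  rw [Finset.sum_fiberwise_of_maps_to (fun ω _ => Finset.mem_univ (X ω)) p]
  exact hp.2

lemma pr_comp [DecidableEq α] [DecidableEq β] [Fintype α] (p : Ω → ℝ) (X : Ω → α)
    (g : α → β) (b : β) :
    pr p (fun ω => g (X ω)) b = ∑ a ∈ Finset.univ.filter (fun a => g a = b), pr p X a := by
  have h := Finset.sum_fiberwise_of_maps_to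
    (s := Finset.univ.filter (fun ω => g (X ω) = b))
    (t := Finset.univ.filter (fun a => g a = b)) (g := X)
    (fun ω hω => by simpa using (Finset.mem_filter.mp hω).2) p
  unfold pr
  rw [← h]
  refine Finset.sum_congr rfl (fun a ha => Finset.sum_congr ?_ (fun _ _ => rfl))
  have hga : g a = b := by simpa using ha
  ext ω
  simp only [Finset.mem_filter, Finset.mem_univ, true_and]
  constructor
  · rintro ⟨-, h2⟩; exact h2
  · intro h2; exact ⟨by rw [h2]; exact hga, h2⟩

lemma pr_comp_le [DecidableEq α] [DecidableEq β] {p : Ω → ℝ} (hp : ∀ ω, 0 ≤ p ω)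
    (X : Ω → α) (g : α → β) (a : α) :
    pr p X a ≤ pr p (fun ω => g (X ω)) (g a) := by
  apply Finset.sum_le_sum_of_subset_of_nonneg
  · intro ω hω
    simp only [Finset.mem_filter, Finset.mem_univ, true_and] at *
    rw [hω]
  · exact fun ω _ _ => hp ω

lemma sum_pr_mul [DecidableEq α] [DecidableEq β] [Fintype α] [Fintype β]
    (p : Ω → ℝ) (X : Ω → α) (g : α → β) (f : β → ℝ) :
    ∑ a, pr p X a * f (g a) = ∑ b, pr p (fun ω => g (X ω)) b * f b := by
  rw [← Finset.sum_fiberwise_of_maps_to (s := (Finset.univ : Finset α))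
    (t := (Finset.univ : Finset β)) (g := g) (fun a _ => Finset.mem_univ (g a))
    (fun a => pr p X a * f (g a))]
  refine Finset.sum_congr rfl (fun b _ => ?_)
  rw [pr_comp, Finset.sum_mul]
  refine Finset.sum_congr rfl (fun a ha => ?_)
  have hga : g a = b := by simpa using ha
  rw [hga]

lemma gibbs [Fintype α] (q r : α → ℝ) (hq0 : ∀ a, 0 ≤ q a) (hq1 : ∑ a, q a = 1)
    (hr0 : ∀ a, 0 ≤ r a) (hr1 : ∑ a, r a ≤ 1) (h : ∀ a, 0 < q a → 0 < r a) :
    ∑ a, q a * Real.logb 2 (r a) ≤ ∑ a, q a * Real.logb 2 (q a) := by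
  have hlog2 : (0:ℝ) < Real.log 2 := Real.log_pos one_lt_two
  have key : ∑ a, q a * Real.log (r a) ≤ ∑ a, q a * Real.log (q a) := by
    classical
    set s := Finset.univ.filter (fun a => 0 < q a) with hs
    have hqz : ∀ a, a ∉ s → q a = 0 := by
      intro a ha
      simp only [hs, Finset.mem_filter, Finset.mem_univ, true_and, not_lt] at ha
      exact le_antisymm ha (hq0 a)
    have hsum_q : ∑ a ∈ s, q a = 1 := by
      rw [← hq1]
      exact (Finset.sum_subset (Finset.subset_univ s)
        (fun a _ ha => hqz a ha)).symm ▸ rfl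
    have e1 : ∑ a, q a * Real.log (r a) = ∑ a ∈ s, q a * Real.log (r a) := by
      symm
      apply Finset.sum_subset (Finset.subset_univ s)
      intro a _ ha; rw [hqz a ha, zero_mul]
    have e2 : ∑ a, q a * Real.log (q a) = ∑ a ∈ s, q a * Real.log (q a) := by
      symm
      apply Finset.sum_subset (Finset.subset_univ s)
      intro a _ ha; rw [hqz a ha, zero_mul]
    rw [e1, e2]
    have hdiff : ∑ a ∈ s, q a * Real.log (r a) - ∑ a ∈ s, q a * Real.log (q a)
        = ∑ a ∈ s, q a * Real.log (r a / q a) := by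
      rw [← Finset.sum_sub_distrib]
      refine Finset.sum_congr rfl (fun a ha => ?_)
      have hqa : 0 < q a := by simpa [hs] using ha
      have hra : 0 < r a := h a hqa
      rw [Real.log_div (ne_of_gt hra) (ne_of_gt hqa)]
      ring
    have hjen : ∑ a ∈ s, q a • Real.log (r a / q a)
        ≤ Real.log (∑ a ∈ s, q a • (r a / q a)) := by
      apply (strictConcaveOn_log_Ioi.concaveOn).le_map_sum
      · intro a ha; exact le_of_lt (by simpa [hs] using ha)
      · exact hsum_q
      · intro a ha
        have hqa : 0 < q a := by simpa [hs] using ha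
        exact div_pos (h a hqa) hqa
    have hsum_r : ∑ a ∈ s, q a • (r a / q a) = ∑ a ∈ s, r a := by
      refine Finset.sum_congr rfl (fun a ha => ?_)
      have hqa : 0 < q a := by simpa [hs] using ha
      simp only [smul_eq_mul]
      rw [mul_comm, div_mul_cancel₀ _ (ne_of_gt hqa)]
    have hrle : ∑ a ∈ s, r a ≤ 1 := by
      refine le_trans ?_ hr1
      apply Finset.sum_le_sum_of_subset_of_nonneg (Finset.subset_univ s)
      exact fun a _ _ => hr0 a
    have hlognp : Real.log (∑ a ∈ s, r a) ≤ 0 :=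
      Real.log_nonpos (Finset.sum_nonneg fun a _ => hr0 a) hrle
    have : ∑ a ∈ s, q a * Real.log (r a / q a) ≤ 0 := by
      calc ∑ a ∈ s, q a * Real.log (r a / q a)
          = ∑ a ∈ s, q a • Real.log (r a / q a) := by simp [smul_eq_mul]
        _ ≤ Real.log (∑ a ∈ s, q a • (r a / q a)) := hjen
        _ = Real.log (∑ a ∈ s, r a) := by rw [hsum_r]
        _ ≤ 0 := hlognp
    linarith [hdiff ▸ this]
  have e1 : ∑ a, q a * Real.logb 2 (r a) = (∑ a, q a * Real.log (r a)) / Real.log 2 := by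
    rw [Finset.sum_div]
    refine Finset.sum_congr rfl (fun a _ => ?_)
    rw [Real.logb, mul_div_assoc]
  have e2 : ∑ a, q a * Real.logb 2 (q a) = (∑ a, q a * Real.log (q a)) / Real.log 2 := by
    rw [Finset.sum_div]
    refine Finset.sum_congr rfl (fun a _ => ?_)
    rw [Real.logb, mul_div_assoc]
  rw [e1, e2]
  exact div_le_div_of_nonneg_right key hlog2.le



lemma ent_comp_le [Fintype α] [Fintype β] [DecidableEq α] [DecidableEq β]
    {p : Ω → ℝ} (hp : ∀ ω, 0 ≤ p ω) (X : Ω → α) (g : α → β) :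
    ent p (fun ω => g (X ω)) ≤ ent p X := by
  unfold ent
  rw [neg_le_neg_iff]
  calc ∑ a, pr p X a * Real.logb 2 (pr p X a)
      ≤ ∑ a, pr p X a * Real.logb 2 (pr p (fun ω => g (X ω)) (g a)) := by
        refine Finset.sum_le_sum (fun a _ => ?_)
        rcases eq_or_lt_of_le (pr_nonneg hp X a) with h0 | h0
        · rw [← h0]; simp
        · have hle := pr_comp_le hp X g a
          exact mul_le_mul_of_nonneg_left
            (Real.logb_le_logb_of_le one_lt_two h0 hle) (le_of_lt h0)
    _ = ∑ b, pr p (fun ω => g (X ω)) b * Real.logb 2 (pr p (fun ω => g (X ω)) b) :=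
        sum_pr_mul p X g (fun b => Real.logb 2 (pr p (fun ω => g (X ω)) b))

lemma ent_congr [Fintype α] [DecidableEq α] (p : Ω → ℝ) {X Y : Ω → α}
    (h : ∀ ω, X ω = Y ω) : ent p X = ent p Y := by rw [funext h]

lemma ent_eq_of_inverse [Fintype α] [Fintype β] [DecidableEq α] [DecidableEq β]
    {p : Ω → ℝ} (hp : ∀ ω, 0 ≤ p ω) (X : Ω → α) (Y : Ω → β) (f : α → β) (g : β → α)
    (h1 : ∀ ω, f (X ω) = Y ω) (h2 : ∀ ω, g (Y ω) = X ω) : ent p X = ent p Y := by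
  refine le_antisymm ?_ ?_
  · calc ent p X = ent p (fun ω => g (Y ω)) := ent_congr p (fun ω => (h2 ω).symm)
      _ ≤ ent p Y := ent_comp_le hp Y g
  · calc ent p Y = ent p (fun ω => f (X ω)) := ent_congr p (fun ω => (h1 ω).symm)
      _ ≤ ent p X := ent_comp_le hp X f

lemma ent_le_card [Fintype α] [DecidableEq α] [Nonempty α]
    {p : Ω → ℝ} (hp : IsProb p) (X : Ω → α) :
    ent p X ≤ Real.logb 2 (Fintype.card α) := by
  have hcard : (0:ℝ) < (Fintype.card α : ℝ) := by
    exact_mod_cast Fintype.card_pos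
  have hg := gibbs (pr p X) (fun _ => (Fintype.card α : ℝ)⁻¹)
    (pr_nonneg hp.1 X) (sum_pr hp X)
    (fun _ => inv_nonneg.mpr hcard.le)
    (by rw [Finset.sum_const, Finset.card_univ, nsmul_eq_mul, mul_inv_cancel₀ (ne_of_gt hcard)])
    (fun _ _ => inv_pos.mpr hcard)
  unfold ent
  have : ∑ a, pr p X a * Real.logb 2 ((Fintype.card α : ℝ)⁻¹)
      = - Real.logb 2 (Fintype.card α) := by
    rw [← Finset.sum_mul, sum_pr hp X, one_mul, Real.logb_inv]
  linarith [hg, this ▸ hg]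

lemma ent_pair_le [Fintype α] [Fintype β] [DecidableEq α] [DecidableEq β]
    {p : Ω → ℝ} (hp : IsProb p) (X : Ω → α) (Y : Ω → β) :
    ent p (fun ω => (X ω, Y ω)) ≤ ent p X + ent p Y := by
  set Z : Ω → α × β := fun ω => (X ω, Y ω) with hZ
  have hfst : ∀ a, pr p (fun ω => (Z ω).1) a = pr p X a := fun a => by
    rw [pr_congr p (fun ω => rfl : ∀ ω, (Z ω).1 = X ω)]
  have hsnd : ∀ b, pr p (fun ω => (Z ω).2) b = pr p Y b := fun b => by
    rw [pr_congr p (fun ω => rfl : ∀ ω, (Z ω).2 = Y ω)]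
  have hr1 : ∑ z : α × β, pr p X z.1 * pr p Y z.2 = 1 := by
    rw [Fintype.sum_prod_type]
    calc ∑ a, ∑ b, pr p X a * pr p Y b = ∑ a, pr p X a * ∑ b, pr p Y b := by
          refine Finset.sum_congr rfl (fun a _ => ?_); rw [Finset.mul_sum]
      _ = 1 := by rw [sum_pr hp Y]; simp [sum_pr hp X]
  have hg := gibbs (pr p Z) (fun z => pr p X z.1 * pr p Y z.2)
    (pr_nonneg hp.1 Z) (sum_pr hp Z)
    (fun z => mul_nonneg (pr_nonneg hp.1 X _) (pr_nonneg hp.1 Y _))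
    (le_of_eq hr1)
    (fun z hz => by
      have h1 : pr p Z z ≤ pr p X z.1 := by
        rw [← hfst]; exact pr_comp_le hp.1 Z Prod.fst z
      have h2 : pr p Z z ≤ pr p Y z.2 := by
        rw [← hsnd]; exact pr_comp_le hp.1 Z Prod.snd z
      exact mul_pos (lt_of_lt_of_le hz h1) (lt_of_lt_of_le hz h2))
  have hsplit : ∑ z, pr p Z z * Real.logb 2 (pr p X z.1 * pr p Y z.2)
      = ∑ z, pr p Z z * Real.logb 2 (pr p X z.1)
        + ∑ z, pr p Z z * Real.logb 2 (pr p Y z.2) := by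
    rw [← Finset.sum_add_distrib]
    refine Finset.sum_congr rfl (fun z _ => ?_)
    rcases eq_or_lt_of_le (pr_nonneg hp.1 Z z) with h0 | h0
    · rw [← h0]; ring
    · have h1 : 0 < pr p X z.1 := lt_of_lt_of_le h0 (by
        rw [← hfst]; exact pr_comp_le hp.1 Z Prod.fst z)
      have h2 : 0 < pr p Y z.2 := lt_of_lt_of_le h0 (by
        rw [← hsnd]; exact pr_comp_le hp.1 Z Prod.snd z)
      rw [Real.logb_mul (ne_of_gt h1) (ne_of_gt h2)]; ring
  have hX : ∑ z, pr p Z z * Real.logb 2 (pr p X z.1)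
      = ∑ a, pr p X a * Real.logb 2 (pr p X a) := by
    rw [sum_pr_mul p Z Prod.fst (fun a => Real.logb 2 (pr p X a))]
  have hY : ∑ z, pr p Z z * Real.logb 2 (pr p Y z.2)
      = ∑ b, pr p Y b * Real.logb 2 (pr p Y b) := by
    rw [sum_pr_mul p Z Prod.snd (fun b => Real.logb 2 (pr p Y b))]
  unfold ent
  rw [hsplit, hX, hY] at hg
  linarith

lemma sum_filter_snd [Fintype α] [Fintype γ] [DecidableEq γ] (F : α × γ → ℝ) (u : γ) :
    ∑ z ∈ Finset.univ.filter (fun z : α × γ => z.2 = u), F z = ∑ x, F (x, u) := by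
  rw [Finset.sum_filter, Fintype.sum_prod_type]
  simp

lemma pr_marg_fst [Fintype α] [Fintype γ] [DecidableEq α] [DecidableEq γ]
    (p : Ω → ℝ) (X : Ω → α) (U : Ω → γ) (u : γ) :
    ∑ x, pr p (fun ω => (X ω, U ω)) (x, u) = pr p U u := by
  have h1 : pr p U u = pr p (fun ω => ((fun ω => (X ω, U ω)) ω).2) u := by
    rw [pr_congr p (fun ω => rfl : ∀ ω, U ω = ((fun ω => (X ω, U ω)) ω).2)]
  rw [h1, pr_comp p (fun ω => (X ω, U ω)) Prod.snd u, sum_filter_snd]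

lemma submod [Fintype α] [Fintype β] [Fintype γ] [DecidableEq α] [DecidableEq β]
    [DecidableEq γ] {p : Ω → ℝ} (hp : IsProb p) (X : Ω → α) (W : Ω → β) (U : Ω → γ) :
    ent p (fun ω => (X ω, W ω, U ω)) + ent p U
      ≤ ent p (fun ω => (X ω, U ω)) + ent p (fun ω => (W ω, U ω)) := by
  classical
  set T : Ω → α × β × γ := fun ω => (X ω, W ω, U ω) with hT
  set XU : Ω → α × γ := fun ω => (X ω, U ω) with hXU
  set WU : Ω → β × γ := fun ω => (W ω, U ω) with hWU
  set r : α × β × γ → ℝ := fun z =>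
    if pr p U z.2.2 = 0 then 0
    else pr p XU (z.1, z.2.2) * pr p WU z.2 / pr p U z.2.2 with hr
  have hr0 : ∀ z, 0 ≤ r z := by
    intro z
    by_cases h : pr p U z.2.2 = 0
    · simp [hr, h]
    · simp only [hr, if_neg h]
      apply div_nonneg (mul_nonneg (pr_nonneg hp.1 XU _) (pr_nonneg hp.1 WU _))
        (pr_nonneg hp.1 U _)
  have hmargXU : ∀ u, ∑ x, pr p XU (x, u) = pr p U u := pr_marg_fst p X U
  have hmargWU : ∀ u, ∑ w, pr p WU (w, u) = pr p U u := pr_marg_fst p W U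
  have hr1 : ∑ z, r z ≤ 1 := by
    have e : ∑ z : α × β × γ, r z = ∑ u, ∑ x, ∑ w, r (x, (w, u)) := by
      calc ∑ z : α × β × γ, r z = ∑ x, ∑ w, ∑ u, r (x, (w, u)) := by
            rw [Fintype.sum_prod_type]
            exact Finset.sum_congr rfl fun x _ => Fintype.sum_prod_type _
        _ = ∑ x, ∑ u, ∑ w, r (x, (w, u)) :=
            Finset.sum_congr rfl fun x _ => Finset.sum_comm
        _ = ∑ u, ∑ x, ∑ w, r (x, (w, u)) := Finset.sum_comm
    rw [e, ← sum_pr hp U]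
    apply Finset.sum_le_sum
    intro u _
    by_cases h : pr p U u = 0
    · simp only [hr, h, if_pos]
      simp [pr_nonneg hp.1 U u, h]
    · have : ∀ x : α, ∑ w, r (x, (w, u)) = pr p XU (x, u) := by
        intro x
        simp only [hr, if_neg h]
        rw [← Finset.sum_div, ← Finset.mul_sum, hmargWU u,
          mul_div_assoc, div_self h, mul_one]
      rw [Finset.sum_congr rfl fun x _ => this x, hmargXU u]
  have hcompXU : pr p (fun ω => ((T ω).1, (T ω).2.2)) = pr p XU :=
    pr_congr p (fun ω => rfl)
  have hcompWU : pr p (fun ω => (T ω).2) = pr p WU := pr_congr p (fun ω => rfl)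
  have hcompU : pr p (fun ω => (T ω).2.2) = pr p U := pr_congr p (fun ω => rfl)
  have hposXU : ∀ z, 0 < pr p T z → 0 < pr p XU (z.1, z.2.2) := by
    intro z hz
    have := pr_comp_le hp.1 T (fun z => (z.1, z.2.2)) z
    rw [hcompXU] at this
    exact lt_of_lt_of_le hz this
  have hposWU : ∀ z, 0 < pr p T z → 0 < pr p WU z.2 := by
    intro z hz
    have := pr_comp_le hp.1 T Prod.snd z
    rw [hcompWU] at this
    exact lt_of_lt_of_le hz this
  have hposU : ∀ z, 0 < pr p T z → 0 < pr p U z.2.2 := by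
    intro z hz
    have := pr_comp_le hp.1 T (fun z => z.2.2) z
    rw [hcompU] at this
    exact lt_of_lt_of_le hz this
  have hg := gibbs (pr p T) r (pr_nonneg hp.1 T) (sum_pr hp T) hr0 hr1
    (fun z hz => by
      simp only [hr, if_neg (ne_of_gt (hposU z hz))]
      exact div_pos (mul_pos (hposXU z hz) (hposWU z hz)) (hposU z hz))
  have hsplit : ∑ z, pr p T z * Real.logb 2 (r z)
      = (∑ z, pr p T z * Real.logb 2 (pr p XU (z.1, z.2.2)))
        + (∑ z, pr p T z * Real.logb 2 (pr p WU z.2))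
        - (∑ z, pr p T z * Real.logb 2 (pr p U z.2.2)) := by
    rw [← Finset.sum_add_distrib, ← Finset.sum_sub_distrib]
    refine Finset.sum_congr rfl (fun z _ => ?_)
    rcases eq_or_lt_of_le (pr_nonneg hp.1 T z) with h0 | h0
    · rw [← h0]; ring
    · have h1 := hposXU z h0
      have h2 := hposWU z h0
      have h3 := hposU z h0
      simp only [hr, if_neg (ne_of_gt h3)]
      rw [Real.logb_div (ne_of_gt (mul_pos h1 h2)) (ne_of_gt h3),
        Real.logb_mul (ne_of_gt h1) (ne_of_gt h2)]
      ring
  have hXU : ∑ z, pr p T z * Real.logb 2 (pr p XU (z.1, z.2.2))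
      = ∑ y, pr p XU y * Real.logb 2 (pr p XU y) := by
    rw [sum_pr_mul p T (fun z => (z.1, z.2.2)) (fun y => Real.logb 2 (pr p XU y))]

  have hWU : ∑ z, pr p T z * Real.logb 2 (pr p WU z.2)
      = ∑ y, pr p WU y * Real.logb 2 (pr p WU y) := by
    rw [sum_pr_mul p T Prod.snd (fun y => Real.logb 2 (pr p WU y))]

  have hU : ∑ z, pr p T z * Real.logb 2 (pr p U z.2.2)
      = ∑ u, pr p U u * Real.logb 2 (pr p U u) := by
    rw [sum_pr_mul p T (fun z => z.2.2) (fun u => Real.logb 2 (pr p U u))]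

  rw [hsplit, hXU, hWU, hU] at hg
  show ent p T + ent p U ≤ ent p XU + ent p WU
  unfold ent
  linarith

lemma mi_comp_right [Fintype α] [Fintype β] [Fintype γ] [DecidableEq α] [DecidableEq β]
    [DecidableEq γ] {p : Ω → ℝ} (hp : IsProb p) (X : Ω → α) (Y : Ω → β) (g : β → γ)
    (Y' : Ω → γ) (hY : ∀ ω, g (Y ω) = Y' ω) : mi p X Y' ≤ mi p X Y := by
  have e1 : ent p (fun ω => (Y ω, Y' ω)) = ent p Y :=
    ent_eq_of_inverse hp.1 _ _ Prod.fst (fun y => (y, g y))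
      (fun ω => rfl) (fun ω => by simp only [hY ω])
  have e2 : ent p (fun ω => (X ω, Y ω, Y' ω)) = ent p (fun ω => (X ω, Y ω)) :=
    ent_eq_of_inverse hp.1 _ _ (fun z => (z.1, z.2.1))
      (fun z => (z.1, (z.2, g z.2))) (fun ω => rfl) (fun ω => by simp only []; rw [hY ω])
  have hsub := submod hp X Y Y'
  rw [e1, e2] at hsub
  unfold mi
  linarith

lemma mi_comm [Fintype α] [Fintype β] [DecidableEq α] [DecidableEq β]
    {p : Ω → ℝ} (hp : IsProb p) (X : Ω → α) (Y : Ω → β) : mi p X Y = mi p Y X := by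
  unfold mi
  rw [ent_eq_of_inverse hp.1 (fun ω => (X ω, Y ω)) (fun ω => (Y ω, X ω))
    Prod.swap Prod.swap (fun ω => rfl) (fun ω => rfl)]
  ring

lemma mi_comp_left [Fintype α] [Fintype β] [Fintype γ] [DecidableEq α] [DecidableEq β]
    [DecidableEq γ] {p : Ω → ℝ} (hp : IsProb p) (X : Ω → α) (Y : Ω → β) (f : α → γ)
    (X' : Ω → γ) (hX : ∀ ω, f (X ω) = X' ω) : mi p X' Y ≤ mi p X Y := by
  rw [mi_comm hp X' Y, mi_comm hp X Y]
  exact mi_comp_right hp Y X f X' hX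

lemma ent_pair_ge [Fintype α] [Fintype β] [DecidableEq α] [DecidableEq β]
    {p : Ω → ℝ} (hp : IsProb p) (X : Ω → α) (Y : Ω → β) (hmi : mi p X Y ≤ (ε : ℝ)) :
    ent p X + ent p Y - ε ≤ ent p (fun ω => (X ω, Y ω)) := by
  unfold mi at hmi
  linarith

lemma bool_xor_cancel (a c : Bool) : xor a (xor a c) = c := by
  cases a <;> cases c <;> rfl

lemma chain {ι A B : Type*} [Fintype ι] [DecidableEq ι]
    [Fintype A] [DecidableEq A] [Fintype B] [DecidableEq B] [Inhabited A]
    {p : Ω → ℝ} (hp : IsProb p) (ε : ℝ) (S : Ω → B) (W : ι → Ω → A)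
    (hmi : ∀ (i : ι) (G : Finset ι), i ∉ G →
      mi p (W i) (fun ω => (S ω, fun j => if j ∈ G then W j ω else default)) ≤ ε)
    (F : Finset ι) :
    ent p S + ∑ i ∈ F, (ent p (W i) - ε)
      ≤ ent p (fun ω => (S ω, fun j => if j ∈ F then W j ω else default)) := by
  classical
  induction F using Finset.induction_on with
  | empty =>
    simp only [Finset.sum_empty, add_zero, Finset.notMem_empty, if_false]
    exact le_of_eq (ent_eq_of_inverse hp.1 S
      (fun ω => (S ω, fun (_ : ι) => (default : A)))
      (fun s => (s, fun _ => default)) Prod.fst (fun ω => rfl) (fun ω => rfl))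
  | @insert i F hiF ih =>
    rw [Finset.sum_insert hiF]
    have h1 : ∀ ω, (fun st : B × (ι → A) =>
        (st.2 i, (st.1, fun j => if j ∈ F then st.2 j else default)))
        ((fun ω => (S ω, fun j => if j ∈ insert i F then W j ω else default)) ω)
        = (W i ω, (S ω, fun j => if j ∈ F then W j ω else default)) := by
      intro ω
      have c1 : (if i ∈ insert i F then W i ω else default) = W i ω :=
        if_pos (Finset.mem_insert_self i F)
      have c2 : (fun j => if j ∈ F then
            (if j ∈ insert i F then W j ω else default) else default)
          = (fun j => if j ∈ F then W j ω else default) := by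
        funext j
        by_cases hj : j ∈ F <;> simp [hj, Finset.mem_insert_of_mem]
      exact congrArg₂ Prod.mk c1 (congrArg₂ Prod.mk rfl c2)
    have h2 : ∀ ω, (fun xst : A × (B × (ι → A)) =>
        (xst.2.1, fun j => if j = i then xst.1 else xst.2.2 j))
        ((fun ω => (W i ω, (S ω, fun j => if j ∈ F then W j ω else default))) ω)
        = (S ω, fun j => if j ∈ insert i F then W j ω else default) := by
      intro ω
      refine congrArg₂ Prod.mk rfl (funext fun j => ?_)
      by_cases hji : j = i
      · subst hji; simp
      · simp [hji, Finset.mem_insert]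
    have e : ent p (fun ω => (S ω, fun j => if j ∈ insert i F then W j ω else default))
        = ent p (fun ω => (W i ω, (S ω, fun j => if j ∈ F then W j ω else default))) :=
      ent_eq_of_inverse hp.1 _ _
        (fun st : B × (ι → A) =>
          (st.2 i, (st.1, fun j => if j ∈ F then st.2 j else default)))
        (fun xst : A × (B × (ι → A)) =>
          (xst.2.1, fun j => if j = i then xst.1 else xst.2.2 j)) h1 h2
    have key := ent_pair_ge (ε := ε) hp (W i)
      (fun ω => (S ω, fun j => if j ∈ F then W j ω else default)) (hmi i F hiF)
    rw [e]
    linarith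

end Aux


open Aux

/-- the `m−1` keys `K_2, …, K_m` (indexed here by `Fin (m-1)`) are
near-uniform and near-independent bit strings, `K* = K_{i*}` is a shortest one,
and `V̄_i = K* ⊕ K̄_i` with `K̄_i` the truncation of `K_i` to its first `|K*|`
bits.  Then `I(K*; V̄_2, …, V̄_m) ≤ 2(m−2)ε`. -/
theorem xor_views_leak_little
    {Ω : Type*} [Fintype Ω] (m : ℕ) (hm : 2 ≤ m) (ε : ℝ)
    (p : Ω → ℝ) (hp : IsProb p)
    (n : Fin (m - 1) → ℕ) (K : ∀ i : Fin (m - 1), Ω → (Fin (n i) → Bool))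
    (istar : Fin (m - 1))
    (hshort : ∀ i, n istar ≤ n i)
    (huniform : ∀ i, ent p (K i) ≥ (n i : ℝ) - ε)
    (hindep : ∀ i, mi p (K i)
      (fun ω (j : {j : Fin (m - 1) // j ≠ i}) => K j.1 ω) ≤ ε) :
    mi p (K istar)
      (fun ω (i : {i : Fin (m - 1) // i ≠ istar}) (b : Fin (n istar)) =>
        xor (K istar ω b) (K i.1 ω (Fin.castLE (hshort i.1) b)))
      ≤ 2 * ((m : ℝ) - 2) * ε := by
  classical
  obtain ⟨hp0, -⟩ := id hp
  set Kb : ∀ _ : Fin (m - 1), Ω → (Fin (n istar) → Bool) :=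
    fun i ω b => K i ω (Fin.castLE (hshort i) b) with hKbdef
  -- Step E: each truncated key is still nearly uniform
  have hKb : ∀ i, (n istar : ℝ) - ε ≤ ent p (Kb i) := by
    intro i
    set R : Ω → (Fin (n i - n istar) → Bool) :=
      fun ω b => K i ω ⟨n istar + b.1, by
        have h1 := b.isLt; have h2 := hshort i; omega⟩ with hRdef
    have key : ent p (K i) = ent p (fun ω => (Kb i ω, R ω)) := by
      refine ent_eq_of_inverse hp0 (K i) _
        (fun v => ((fun b => v (Fin.castLE (hshort i) b)),
          (fun b => v ⟨n istar + b.1, by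
            have h1 := b.isLt; have h2 := hshort i; omega⟩)))
        (fun xy => fun c => if h : c.1 < n istar then xy.1 ⟨c.1, h⟩
          else xy.2 ⟨c.1 - n istar, by
            have h1 := c.isLt; have h2 := hshort i; omega⟩)
        (fun ω => rfl) (fun ω => ?_)
      funext c
      by_cases h : c.1 < n istar
      · simp only [dif_pos h]
        exact congrArg (K i ω) (by apply Fin.ext; simp)
      · simp only [dif_neg h]
        exact congrArg (K i ω) (by apply Fin.ext; simp; omega)
    have sub := ent_pair_le hp (Kb i) R
    have hRcard : ent p R ≤ Real.logb 2 (Fintype.card (Fin (n i - n istar) → Bool)) :=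
      ent_le_card hp R
    have hcard : (Fintype.card (Fin (n i - n istar) → Bool) : ℝ)
        = (2 : ℝ) ^ (n i - n istar) := by
      rw [Fintype.card_fun]
      push_cast
      simp
    have hlogR : Real.logb 2 (Fintype.card (Fin (n i - n istar) → Bool))
        = ((n i - n istar : ℕ) : ℝ) := by
      rw [hcard, Real.logb_pow, Real.logb_self_eq_one one_lt_two, mul_one]
    have hd : ((n i - n istar : ℕ) : ℝ) = (n i : ℝ) - (n istar : ℝ) := by
      rw [Nat.cast_sub (hshort i)]
    have hu := huniform i
    rw [key] at hu
    rw [hlogR, hd] at hRcard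
    linarith
  -- data processing: each truncated key nearly independent of the others
  have hmiW : ∀ (i : {i : Fin (m - 1) // i ≠ istar})
      (G : Finset {i : Fin (m - 1) // i ≠ istar}), i ∉ G →
      mi p (Kb i.1) (fun ω => (K istar ω,
        fun j => if j ∈ G then Kb j.1 ω else default)) ≤ ε := by
    intro i G hiG
    have step1 : mi p (Kb i.1) (fun ω => (K istar ω,
        fun j => if j ∈ G then Kb j.1 ω else default))
        ≤ mi p (Kb i.1) (fun ω (j : {j : Fin (m - 1) // j ≠ i.1}) => K j.1 ω) := by
      refine mi_comp_right hp (Kb i.1) _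
        (fun z : (j : {j : Fin (m - 1) // j ≠ i.1}) → (Fin (n j.1) → Bool) =>
          (z ⟨istar, Ne.symm i.2⟩, fun (j : {j : Fin (m - 1) // j ≠ istar}) =>
            if hj : j ∈ G then
              (fun b => z ⟨j.1, fun e => hiG (by rwa [Subtype.ext e] at hj)⟩
                (Fin.castLE (hshort j.1) b))
            else default)) _ (fun ω => ?_)
      refine congrArg₂ Prod.mk rfl (funext fun j => ?_)
      by_cases hj : j ∈ G <;> simp [hj, hKbdef]
    have step2 : mi p (Kb i.1)
        (fun ω (j : {j : Fin (m - 1) // j ≠ i.1}) => K j.1 ω)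
        ≤ mi p (K i.1) (fun ω (j : {j : Fin (m - 1) // j ≠ i.1}) => K j.1 ω) :=
      mi_comp_left hp (K i.1) _
        (fun v (b : Fin (n istar)) => v (Fin.castLE (hshort i.1) b)) (Kb i.1)
        (fun ω => rfl)
    exact le_trans (le_trans step1 step2) (hindep i.1)
  -- chain bound
  have hchain := chain hp ε (K istar)
    (fun (j : {i : Fin (m - 1) // i ≠ istar}) => Kb j.1) hmiW Finset.univ
  -- relate (K*, V) to (K*, truncated keys)
  set V : Ω → ({i : Fin (m - 1) // i ≠ istar} → (Fin (n istar) → Bool)) :=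
    fun ω i b => xor (K istar ω b) (K i.1 ω (Fin.castLE (hshort i.1) b)) with hVdef
  have eV : ent p (fun ω => (K istar ω, V ω))
      = ent p (fun ω => (K istar ω,
          fun j => if j ∈ (Finset.univ : Finset {i : Fin (m - 1) // i ≠ istar})
            then Kb j.1 ω else default)) := by
    refine ent_eq_of_inverse hp0 _ _
      (fun st : (Fin (n istar) → Bool) ×
          ({i : Fin (m - 1) // i ≠ istar} → (Fin (n istar) → Bool)) =>
        (st.1, fun j b => xor (st.1 b) (st.2 j b)))
      (fun st : (Fin (n istar) → Bool) ×
          ({i : Fin (m - 1) // i ≠ istar} → (Fin (n istar) → Bool)) =>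
        (st.1, fun j b => xor (st.1 b) (st.2 j b)))
      (fun ω => ?_) (fun ω => ?_)
    · refine congrArg₂ Prod.mk rfl (funext fun j => funext fun b => ?_)
      simp [hVdef, hKbdef, bool_xor_cancel]
    · refine congrArg₂ Prod.mk rfl (funext fun j => funext fun b => ?_)
      simp [hVdef, hKbdef]
  -- entropy of the view is at most (m-2) * n*
  have hcardJ : Fintype.card {i : Fin (m - 1) // i ≠ istar} = m - 2 := by
    have h1 : Fintype.card {i : Fin (m - 1) // i ≠ istar}
        = Fintype.card (Fin (m - 1)) - 1 := by
      simp [Fintype.card_subtype_compl, Fintype.card_subtype_eq]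
    rw [h1, Fintype.card_fin]
    omega
  have hentV : ent p V ≤ ((m : ℝ) - 2) * (n istar : ℝ) := by
    have h1 : ent p V ≤ Real.logb 2
        (Fintype.card ({i : Fin (m - 1) // i ≠ istar} → (Fin (n istar) → Bool))) :=
      ent_le_card hp V
    have h2 : (Fintype.card ({i : Fin (m - 1) // i ≠ istar} → (Fin (n istar) → Bool)) : ℝ)
        = ((2 : ℝ) ^ (n istar)) ^ (m - 2) := by
      rw [Fintype.card_fun, hcardJ, Fintype.card_fun]
      push_cast
      simp
    rw [h2, Real.logb_pow, Real.logb_pow, Real.logb_self_eq_one one_lt_two,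
      mul_one] at h1
    have h3 : ((m - 2 : ℕ) : ℝ) = (m : ℝ) - 2 := by
      rw [Nat.cast_sub hm]; norm_num
    rw [h3] at h1
    linarith [h1]
  -- sum over all the other keys
  have hsum : ((m : ℝ) - 2) * ((n istar : ℝ) - 2 * ε)
      ≤ ∑ j : {i : Fin (m - 1) // i ≠ istar}, (ent p (Kb j.1) - ε) := by
    have h4 := Finset.card_nsmul_le_sum
      (Finset.univ : Finset {i : Fin (m - 1) // i ≠ istar})
      (fun j => ent p (Kb j.1) - ε) ((n istar : ℝ) - 2 * ε)
      (fun j _ => by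
        have := hKb j.1
        show (n istar : ℝ) - 2 * ε ≤ ent p (Kb j.1) - ε
        linarith)
    rw [Finset.card_univ, hcardJ, nsmul_eq_mul] at h4
    have h3 : ((m - 2 : ℕ) : ℝ) = (m : ℝ) - 2 := by
      rw [Nat.cast_sub hm]; norm_num
    rwa [h3] at h4
  -- put everything together
  show mi p (K istar) V ≤ 2 * ((m : ℝ) - 2) * ε
  have hfinal : mi p (K istar) V
      = ent p (K istar) + ent p V - ent p (fun ω => (K istar ω, V ω)) := rfl
  rw [hfinal, eV]
  have := hchain
  nlinarith [hentV, hsum, hchain]
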